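/- A weakly dicomplemented lattice with negation satisfies the de Morgan laws: (x ∧ y)‾ = x̄ ∨ ȳ and (x ∨ y)‾ = x̄ ∧ ȳ, where x̄ denotes the common value x^△ = x^▽. -/
import Mathlib


/-- A weakly dicomplemented lattice with negation satisfies the de Morgan laws. -/
theorem stmt_12 {L : Type*} [Lattice L] [BoundedOrder L]
    (tri dtri : L → L)
    (h1 : ∀ x : L, tri (tri x) ≤ x)
    (h2 : ∀ x y : L, x ≤ y → tri y ≤ tri x)
    (h3 : ∀ x y : L, (x ⊓ y) ⊔ (x ⊓ tri y) = x)
    (h1' : ∀ x : L, x ≤ dtri (dtri x))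
    (h2' : ∀ x y : L, x ≤ y → dtri y ≤ dtri x)
    (h3' : ∀ x y : L, (x ⊔ y) ⊓ (x ⊔ dtri y) = x)
    (hneg : ∀ x : L, tri x = dtri x) :
    ∀ x y : L, tri (x ⊓ y) = tri x ⊔ tri y ∧ tri (x ⊔ y) = tri x ⊓ tri y := by
  have hinv : ∀ x : L, tri (tri x) = x := by
    intro x
    refine le_antisymm (h1 x) ?_
    have := h1' x
    rw [← hneg, ← hneg] at this
    exact this
  intro x y
  constructor
  · refine le_antisymm ?_ (sup_le (h2 _ _ inf_le_left) (h2 _ _ inf_le_right))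
    have hx : tri (tri x ⊔ tri y) ≤ x := (h2 _ _ le_sup_left).trans_eq (hinv x)
    have hy : tri (tri x ⊔ tri y) ≤ y := (h2 _ _ le_sup_right).trans_eq (hinv y)
    have := h2 _ _ (le_inf hx hy)
    rwa [hinv] at this
  · refine le_antisymm (le_inf (h2 _ _ le_sup_left) (h2 _ _ le_sup_right)) ?_
    have hx : x ≤ tri (tri x ⊓ tri y) := by
      have := h2 (tri x ⊓ tri y) (tri x) inf_le_left
      rwa [hinv] at this
    have hy : y ≤ tri (tri x ⊓ tri y) := by
      have := h2 (tri x ⊓ tri y) (tri y) inf_le_right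
      rwa [hinv] at this
    have := h2 _ _ (sup_le hx hy)
    rwa [hinv] at this
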